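/- If the graph G is connected, then l is strictly concave on the hyperplane {u : Fin n → ℝ | ∑_i u_i = 0}: for all u ≠ w with ∑_i u_i = ∑_i w_i = 0, one has l((u+w)/2) > (l(u)+l(w))/2. Consequently, l has at most one maximizer on this hyperplane; i.e., the maximum likelihood estimator, when it exists, is unique under the identifiability constraint 1ᵀu = 0. -/

import Mathlib

lemma const_of_adj_const {n : ℕ} {G : SimpleGraph (Fin n)} (d : Fin n → ℝ)
    (h : ∀ i j, G.Adj i j → d i = d j) :
    ∀ i j : Fin n, G.Reachable i j → d i = d j := by
  intro i j hr
  obtain ⟨p⟩ := hr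
  induction p with
  | nil => rfl
  | cons hadj p ih => exact (h _ _ hadj).trans ih

/-- if the comparison graph is connected, the log-likelihood
`l(u) = ∑_{edges {i,j}, i<j} φ_{ij}(u_i - u_j)`, built from strictly (midpoint) concave
functions `φ_{ij}`, is strictly concave on the hyperplane `{u | ∑ i, u i = 0}`;
consequently it has at most one maximizer on this hyperplane. -/
theorem mle_unique_on_connected_graph
    {n : ℕ} (G : SimpleGraph (Fin n)) [DecidableRel G.Adj]
    (hconn : G.Connected)
    (φ : Fin n → Fin n → ℝ → ℝ)
    (hφ : ∀ i j, i < j → G.Adj i j → ∀ s t : ℝ, s ≠ t →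
      (φ i j s + φ i j t) / 2 < φ i j ((s + t) / 2))
    (l : (Fin n → ℝ) → ℝ)
    (hl : ∀ u, l u = ∑ i : Fin n, ∑ j : Fin n,
      if i < j ∧ G.Adj i j then φ i j (u i - u j) else 0) :
    (∀ u w : Fin n → ℝ, u ≠ w → ∑ i, u i = 0 → ∑ i, w i = 0 →
      (l u + l w) / 2 < l (fun i => (u i + w i) / 2)) ∧
    (∀ u w : Fin n → ℝ, (∑ i, u i = 0) → (∑ i, w i = 0) →
      (∀ v : Fin n → ℝ, (∑ i, v i = 0) → l v ≤ l u) →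
      (∀ v : Fin n → ℝ, (∑ i, v i = 0) → l v ≤ l w) → u = w) := by
  have npos : 0 < n := Fin.pos_iff_nonempty.mpr hconn.nonempty
  have key : ∀ u w : Fin n → ℝ, u ≠ w → ∑ i, u i = 0 → ∑ i, w i = 0 →
      (l u + l w) / 2 < l (fun i => (u i + w i) / 2) := by
    intro u w hne hu hw
    -- find an edge across which u - w differs
    have hd : ∃ a b, a < b ∧ G.Adj a b ∧ u a - w a ≠ u b - w b := by
      by_contra h
      push_neg at h
      have h' : ∀ i j, G.Adj i j → u i - w i = u j - w j := by
        intro i j hadj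
        rcases lt_or_gt_of_ne hadj.ne with hij | hij
        · exact h i j hij hadj
        · exact (h j i hij hadj.symm).symm
      have hc : ∀ i j : Fin n, u i - w i = u j - w j :=
        fun i j => const_of_adj_const (fun k => u k - w k) h' i j (hconn i j)
      apply hne
      funext k
      have hsum : ∑ i, (u i - w i) = 0 := by
        rw [Finset.sum_sub_distrib, hu, hw]; ring
      have h2 : ∑ i : Fin n, (u i - w i) = n * (u k - w k) := by
        rw [Finset.sum_congr rfl (fun i _ => hc i k)]
        simp [Finset.sum_const, Finset.card_univ, mul_comm]
        ring
      have h3 : (n : ℝ) * (u k - w k) = 0 := by rw [← h2, hsum]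
      have hn0 : (n : ℝ) ≠ 0 := Nat.cast_ne_zero.mpr npos.ne'
      have : u k - w k = 0 := by
        rcases mul_eq_zero.mp h3 with h | h
        · exact absurd h hn0
        · exact h
      linarith
    obtain ⟨a, b, hab, hadj, hneq⟩ := hd
    rw [hl u, hl w, hl (fun i => (u i + w i) / 2)]
    rw [← Finset.sum_product' (f := fun i j =>
        if i < j ∧ G.Adj i j then φ i j (u i - u j) else 0),
      ← Finset.sum_product' (f := fun i j =>
        if i < j ∧ G.Adj i j then φ i j (w i - w j) else 0),
      ← Finset.sum_product' (f := fun i j =>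
        if i < j ∧ G.Adj i j then φ i j ((u i + w i) / 2 - (u j + w j) / 2) else 0),
      ← Finset.sum_add_distrib, Finset.sum_div]
    apply Finset.sum_lt_sum
    · intro p _
      by_cases hc : p.1 < p.2 ∧ G.Adj p.1 p.2
      · simp only [hc, if_true]
        by_cases hst : u p.1 - u p.2 = w p.1 - w p.2
        · rw [hst]
          have : (w p.1 - w p.2 + (w p.1 - w p.2)) / 2 = w p.1 - w p.2 := by ring
          have harg : (u p.1 + w p.1) / 2 - (u p.2 + w p.2) / 2 = w p.1 - w p.2 := by
            rw [← hst]; linarith [hst]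
          rw [harg]
          apply le_of_eq; ring
        · have := hφ p.1 p.2 hc.1 hc.2 _ _ hst
          have harg : (u p.1 + w p.1) / 2 - (u p.2 + w p.2) / 2
              = ((u p.1 - u p.2) + (w p.1 - w p.2)) / 2 := by ring
          rw [harg]
          exact le_of_lt this
      · simp only [hc, if_false]
        norm_num
    · refine ⟨(a, b), Finset.mem_product.mpr ⟨Finset.mem_univ a, Finset.mem_univ b⟩, ?_⟩
      have hc : a < b ∧ G.Adj a b := ⟨hab, hadj⟩
      simp only [hc, if_true]
      have hst : u a - u b ≠ w a - w b := by
        intro h; apply hneq; linarith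
      have := hφ a b hab hadj _ _ hst
      have harg : (u a + w a) / 2 - (u b + w b) / 2
          = ((u a - u b) + (w a - w b)) / 2 := by ring
      rw [harg]
      exact this
  refine ⟨key, ?_⟩
  intro u w hu hw hmaxu hmaxw
  by_contra hne
  have hmid : ∑ i, (u i + w i) / 2 = 0 := by
    rw [← Finset.sum_div, Finset.sum_add_distrib, hu, hw]; norm_num
  have h1 := key u w hne hu hw
  have h2 := hmaxu (fun i => (u i + w i) / 2) hmid
  have h3 := hmaxw u hu
  linarith
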